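/- Let $f \in \mathbb{C}_{\mathcal{A}}[T_{\mathbb{C}}]$ be written as $f = \frac{\sum_{w} \lambda_w e_w}{\prod_{y} (1 - e_y)^{\varepsilon(y)}}$ with finitely many nonzero $\lambda_w$, where $e_y(v) = e^{2\pi i y(v)}$. Suppose the linear parts $\{y^\circ : \varepsilon(y) \neq 0\}$ span $V^*$ and $\mu + w$ lies in the open zonotope $D_\varepsilon = \{\sum_y \nu(y)\varepsilon(y) y^\circ : 0 < \nu(y) < 1\}$ for every $w$ with $\lambda_w \neq 0$. Then for every $u \in V_{\mathbb{R}}$ not a pole of $f$ and every nonzero $v \in V_{\mathbb{R}}$, $\lim_{s \to +\infty} e_\mu(\sqrt{-1}(u + s v))\, f(\sqrt{-1}(u + s v)) = 0$. -/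

import Mathlib

open Finset
open scoped Real

/- The 'if' direction of Proposition 4.1: decay of trigonometric rational functions.
`V = ℂⁿ` with real form `ℝⁿ`; the affine forms `y_j` have real linear parts given by
vectors `a j ∈ ℝⁿ` and complex constants `cst j`, with `e_y(z) = e^{2πi(∑ a_j i z_i + c_j)}`;
`w` ranges over a finite family of lattice vectors in `ℝⁿ`. -/

open Filter Complex

private lemma auxA (k : ℝ) (hk : 0 < k) (δ β : ℂ) (T : ℝ → ℝ)
    (hT : Tendsto T atTop atTop) :
    Tendsto (fun s => (δ * ((Real.exp (-(k * T s)) : ℝ) : ℂ)) /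
      (1 - β * ((Real.exp (-(2*π*T s)) : ℝ) : ℂ))) atTop (nhds 0) := by
  have h0 : ∀ (c : ℝ), 0 < c → Tendsto (fun s => Real.exp (-(c * T s))) atTop (nhds 0) := by
    intro c hc
    exact Real.tendsto_exp_atBot.comp
      (tendsto_neg_atTop_atBot.comp (Filter.Tendsto.const_mul_atTop hc hT))
  have hnum : Tendsto (fun s => ((Real.exp (-(k * T s)) : ℝ) : ℂ)) atTop (nhds 0) := by
    have := (Complex.continuous_ofReal.tendsto 0).comp (h0 k hk)
    simpa [Function.comp_def] using this
  have hden : Tendsto (fun s => 1 - β * ((Real.exp (-(2*π*T s)) : ℝ) : ℂ)) atTop (nhds 1) := by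
    have h2 : Tendsto (fun s => ((Real.exp (-(2*π*T s)) : ℝ) : ℂ)) atTop (nhds 0) := by
      have := (Complex.continuous_ofReal.tendsto 0).comp (h0 (2*π) (by positivity))
      simpa [Function.comp_def] using this
    have := (tendsto_const_nhds (x := (1:ℂ))).sub ((tendsto_const_nhds (x := β)).mul h2)
    simpa using this
  have := ((tendsto_const_nhds (x := δ)).mul hnum).div hden one_ne_zero
  rw [mul_zero, zero_div] at this
  exact this.congr fun s => rfl

private lemma auxB (νr : ℝ) (hν : νr < 1) (β : ℂ) (hβ : β ≠ 0) (T : ℝ → ℝ)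
    (hT : Tendsto T atTop atBot) :
    Tendsto (fun s => ((Real.exp (-(2*π*νr * T s)) : ℝ) : ℂ) /
      (1 - β * ((Real.exp (-(2*π*T s)) : ℝ) : ℂ))) atTop (nhds 0) := by
  have hk : 0 < 2*π*(1-νr) := by
    have := Real.pi_pos; nlinarith
  have key := auxA (2*π*(1-νr)) hk (-β⁻¹) β⁻¹ (fun s => -T s)
    (tendsto_neg_atBot_atTop.comp hT)
  refine key.congr fun s => ?_
  beta_reduce
  rw [show -(2*π*(1-νr) * -T s) = -(2*π*νr*T s) + 2*π*T s by ring,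
      show -(2*π * -T s) = 2*π*T s by ring, Real.exp_add]
  have hc : (-β⁻¹) * ((Real.exp (2*π*T s) : ℝ) : ℂ) ≠ 0 :=
    mul_ne_zero (neg_ne_zero.mpr (inv_ne_zero hβ)) (Complex.ofReal_ne_zero.mpr (Real.exp_ne_zero _))
  conv_rhs => rw [← mul_div_mul_right _ _ hc]
  congr 1
  · push_cast; ring
  · have h1 : ((Real.exp (-(2*π*T s)) : ℝ):ℂ) * ((Real.exp (2*π*T s):ℝ):ℂ) = 1 := by
      rw [← Complex.ofReal_mul, ← Real.exp_add]; norm_num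
    have h2 : β * β⁻¹ = 1 := mul_inv_cancel₀ hβ
    linear_combination (-(((Real.exp (-(2*π*T s)) : ℝ):ℂ) * ((Real.exp (2*π*T s):ℝ):ℂ))) * h2 - h1

noncomputable section

/-- `e_t(z) = e^{2πi ∑ tᵢ zᵢ}` for a real covector `t` and `z ∈ ℂⁿ`. -/
def eLin {n : ℕ} (t : Fin n → ℝ) (z : Fin n → ℂ) : ℂ :=
  Complex.exp (2 * (π : ℂ) * Complex.I * ∑ i, (t i : ℂ) * z i)

/-- `e_y(z) = e^{2πi(∑ aᵢ zᵢ + c)}` for an affine form with real linear part `a` and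
constant `c`. -/
def eAff {n : ℕ} (a : Fin n → ℝ) (c : ℂ) (z : Fin n → ℂ) : ℂ :=
  Complex.exp (2 * (π : ℂ) * Complex.I * ((∑ i, (a i : ℂ) * z i) + c))

/-- Proposition 4.1 ('if' direction): if the linear parts of the forms occurring in the
denominator span `(ℝⁿ)*` and `μ + w` lies in the open zonotope `D_ε` for every `w` with
`λ_w ≠ 0`, then `e_μ(i(u+sv)) f(i(u+sv)) → 0` as `s → +∞`, for every `u` not a pole of
`f` and every nonzero `v`. -/
theorem decay_of_trig_rational {n : ℕ} {ι κ : Type*} [Fintype ι] [Fintype κ]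
    (a : ι → Fin n → ℝ) (cst : ι → ℂ) (ε : ι → ℕ)
    (wvec : κ → Fin n → ℝ) (lam : κ → ℂ) (μ : Fin n → ℝ)
    (hspan : Submodule.span ℝ {x : Fin n → ℝ | ∃ j, ε j ≠ 0 ∧ x = a j} = ⊤)
    (hzono : ∀ w : κ, lam w ≠ 0 → ∃ ν : ι → ℝ, (∀ j, 0 < ν j ∧ ν j < 1) ∧
      (fun i => μ i + wvec w i) = ∑ j, (ν j * ε j) • a j)
    (u v : Fin n → ℝ) (hv : v ≠ 0)
    (hu : ∏ j, (1 - eAff (a j) (cst j) (fun i => Complex.I * (u i : ℂ))) ^ ε j ≠ 0) :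
    Filter.Tendsto
      (fun s : ℝ =>
        eLin μ (fun i => Complex.I * ((u i : ℂ) + s * v i)) *
          ((∑ w, lam w * eLin (wvec w) (fun i => Complex.I * ((u i : ℂ) + s * v i))) /
            ∏ j, (1 - eAff (a j) (cst j)
              (fun i => Complex.I * ((u i : ℂ) + s * v i))) ^ ε j))
      Filter.atTop (nhds 0) := by
  classical
  set γ : ι → ℝ := fun j => ∑ i, a j i * v i with hγ
  set α : ι → ℝ := fun j => ∑ i, a j i * u i with hα
  set β : ι → ℂ := fun j => Complex.exp (2*(π:ℂ)*Complex.I*cst j) with hβdef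
  have hβne : ∀ j, β j ≠ 0 := fun j => Complex.exp_ne_zero _
  have hj0 : ∃ j₀, ε j₀ ≠ 0 ∧ γ j₀ ≠ 0 := by
    by_contra h
    push_neg at h
    have hφ : ∀ x ∈ Submodule.span ℝ {x : Fin n → ℝ | ∃ j, ε j ≠ 0 ∧ x = a j},
        ∑ i, x i * v i = 0 := by
      let φ : (Fin n → ℝ) →ₗ[ℝ] ℝ :=
        { toFun := fun x => ∑ i, x i * v i
          map_add' := by intro x y; simp [add_mul, Finset.sum_add_distrib]
          map_smul' := by intro c x; simp [Finset.mul_sum, mul_assoc] }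
      have hsub : {x : Fin n → ℝ | ∃ j, ε j ≠ 0 ∧ x = a j} ⊆ (LinearMap.ker φ : Set _) := by
        rintro x ⟨j, hj, rfl⟩
        exact h j hj
      intro x hx
      exact (Submodule.span_le.mpr hsub) hx
    have hv0 : ∑ i, v i * v i = 0 := hφ v (hspan ▸ Submodule.mem_top)
    apply hv
    funext i
    exact mul_self_eq_zero.mp
      ((Finset.sum_eq_zero_iff_of_nonneg (fun i _ => mul_self_nonneg (v i))).mp hv0 i
        (Finset.mem_univ i))
  obtain ⟨j₀, hε₀, hγ₀⟩ := hj0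
  have hdot : ∀ (b : Fin n → ℝ) (s : ℝ),
      ∑ i, (b i : ℂ) * (Complex.I * ((u i : ℂ) + (s : ℂ) * (v i : ℂ)))
        = Complex.I * (((∑ i, b i * u i : ℝ) : ℂ) + (s : ℂ) * ((∑ i, b i * v i : ℝ) : ℂ)) := by
    intro b s
    have h1 : ∀ i ∈ Finset.univ, (b i : ℂ) * (Complex.I * ((u i : ℂ) + (s:ℂ) * (v i : ℂ)))
        = Complex.I * ((b i * u i : ℝ) : ℂ) + Complex.I * ((s:ℂ) * ((b i * v i : ℝ) : ℂ)) := by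
      intro i _; push_cast; ring
    rw [Finset.sum_congr rfl h1, Finset.sum_add_distrib, ← Finset.mul_sum, ← Finset.mul_sum,
      ← Finset.mul_sum]
    push_cast
    ring
  have claim2 : ∀ (j : ι) (s : ℝ),
      eAff (a j) (cst j) (fun i => Complex.I * ((u i : ℂ) + (s:ℂ) * (v i : ℂ)))
        = β j * ((Real.exp (-(2*π*(α j + s*γ j))) : ℝ) : ℂ) := by
    intro j s
    rw [eAff, hdot (a j) s, hβdef, Complex.ofReal_exp, ← Complex.exp_add]
    congr 1
    rw [show 2*(π:ℂ)*Complex.I*(Complex.I*(((α j:ℝ):ℂ) + (s:ℂ)*((γ j:ℝ):ℂ)) + cst j)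
        = (Complex.I*Complex.I)*(2*(π:ℂ)*(((α j:ℝ):ℂ)+(s:ℂ)*((γ j:ℝ):ℂ))) + 2*(π:ℂ)*Complex.I*cst j
        from by ring, Complex.I_mul_I]
    push_cast
    ring
  suffices h : ∀ w : κ, Tendsto (fun s : ℝ => lam w *
      (eLin μ (fun i => Complex.I * ((u i : ℂ) + s * v i)) *
        eLin (wvec w) (fun i => Complex.I * ((u i : ℂ) + s * v i)) /
        ∏ j, (1 - eAff (a j) (cst j) (fun i => Complex.I * ((u i : ℂ) + s * v i))) ^ ε j))
      atTop (nhds 0) by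
    have hS := tendsto_finset_sum Finset.univ (fun w _ => h w)
    rw [Finset.sum_const_zero] at hS
    refine hS.congr fun s => ?_
    simp only [div_eq_mul_inv, Finset.sum_mul, Finset.mul_sum]
    exact Finset.sum_congr rfl fun w _ => by ring
  intro w
  by_cases hw : lam w = 0
  · simpa [hw] using (tendsto_const_nhds (x := (0:ℂ)) (f := atTop))
  obtain ⟨ν, hν, hsum⟩ := hzono w hw
  have hμw : ∀ i, μ i + wvec w i = ∑ j, (ν j * ε j) * a j i := by
    intro i
    have := congrFun hsum i
    simpa using this
  have claim1 : ∀ s : ℝ,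
      eLin μ (fun i => Complex.I * ((u i : ℂ) + (s:ℂ) * (v i:ℂ))) *
        eLin (wvec w) (fun i => Complex.I * ((u i : ℂ) + (s:ℂ) * (v i:ℂ)))
      = ∏ j, (((Real.exp (-(2*π*ν j * (α j + s*γ j))) : ℝ) : ℂ)) ^ ε j := by
    intro s
    rw [eLin, eLin, ← Complex.exp_add, ← mul_add]
    have hAB : (∑ i, (μ i:ℂ) * (Complex.I * ((u i : ℂ) + (s:ℂ)*(v i:ℂ))))
        + ∑ i, (wvec w i:ℂ) * (Complex.I * ((u i : ℂ) + (s:ℂ)*(v i:ℂ)))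
        = ∑ j, ((ν j * (ε j:ℕ) : ℝ):ℂ) * (Complex.I * (((α j:ℝ):ℂ) + (s:ℂ)*((γ j:ℝ):ℂ))) := by
      rw [← Finset.sum_add_distrib]
      have h2 : ∀ i ∈ Finset.univ, (μ i:ℂ) * (Complex.I * ((u i : ℂ) + (s:ℂ)*(v i:ℂ)))
          + (wvec w i:ℂ) * (Complex.I * ((u i : ℂ) + (s:ℂ)*(v i:ℂ)))
          = ∑ j, ((ν j * (ε j:ℕ):ℝ):ℂ) * ((a j i:ℂ) * (Complex.I * ((u i : ℂ) + (s:ℂ)*(v i:ℂ)))) := by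
        intro i _
        rw [← add_mul, show ((μ i:ℂ) + (wvec w i:ℂ)) = ((μ i + wvec w i : ℝ):ℂ) from by push_cast; ring,
          hμw i]
        push_cast
        rw [Finset.sum_mul]
        exact Finset.sum_congr rfl fun j _ => by ring
      rw [Finset.sum_congr rfl h2, Finset.sum_comm]
      refine Finset.sum_congr rfl fun j _ => ?_
      rw [← Finset.mul_sum, hdot (a j) s]
    rw [hAB, Finset.mul_sum, Complex.exp_sum]
    refine Finset.prod_congr rfl fun j _ => ?_
    rw [Complex.ofReal_exp, ← Complex.exp_nat_mul]
    congr 1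
    rw [show 2*(π:ℂ)*Complex.I*(((ν j * (ε j:ℕ):ℝ):ℂ) * (Complex.I*(((α j:ℝ):ℂ) + (s:ℂ)*((γ j:ℝ):ℂ))))
        = (Complex.I*Complex.I) * (2*(π:ℂ)*((ν j * (ε j:ℕ):ℝ):ℂ)*(((α j:ℝ):ℂ) + (s:ℂ)*((γ j:ℝ):ℂ)))
        from by ring, Complex.I_mul_I]
    push_cast
    ring
  have hfun : ∀ s : ℝ,
      eLin μ (fun i => Complex.I * ((u i : ℂ) + (s:ℂ) * (v i:ℂ))) *
        eLin (wvec w) (fun i => Complex.I * ((u i : ℂ) + (s:ℂ) * (v i:ℂ))) /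
        ∏ j, (1 - eAff (a j) (cst j) (fun i => Complex.I * ((u i : ℂ) + (s:ℂ) * (v i:ℂ)))) ^ ε j
      = ∏ j, ((((Real.exp (-(2*π*ν j * (α j + s*γ j))) : ℝ) : ℂ)) /
          (1 - β j * ((Real.exp (-(2*π*(α j + s*γ j))) : ℝ) : ℂ))) ^ ε j := by
    intro s
    rw [claim1 s]
    rw [Finset.prod_congr rfl (fun j _ => by rw [claim2 j s] :
      ∀ j ∈ Finset.univ, (1 - eAff (a j) (cst j) (fun i => Complex.I * ((u i : ℂ) + (s:ℂ) * (v i:ℂ)))) ^ ε j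
        = (1 - β j * ((Real.exp (-(2*π*(α j + s*γ j))) : ℝ) : ℂ)) ^ ε j)]
    simp only [div_pow, Finset.prod_div_distrib]
  have key : ∀ j : ι, ∃ L : ℂ, Tendsto (fun s : ℝ =>
      ((((Real.exp (-(2*π*ν j * (α j + s*γ j))) : ℝ) : ℂ)) /
        (1 - β j * ((Real.exp (-(2*π*(α j + s*γ j))) : ℝ) : ℂ))) ^ ε j) atTop (nhds L)
      ∧ (ε j ≠ 0 → γ j ≠ 0 → L = 0) := by
    intro j
    by_cases hε : ε j = 0
    · exact ⟨1, by simpa [hε] using (tendsto_const_nhds (x := (1:ℂ)) (f := atTop)),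
        fun h => absurd hε h⟩
    by_cases hγj : γ j = 0
    · refine ⟨((((Real.exp (-(2*π*ν j * α j)) : ℝ) : ℂ)) /
          (1 - β j * ((Real.exp (-(2*π*α j)) : ℝ) : ℂ))) ^ ε j, ?_, fun _ h => absurd hγj h⟩
      have hconst : ∀ s : ℝ, α j + s * γ j = α j := fun s => by rw [hγj]; ring
      simp only [hconst]
      exact tendsto_const_nhds
    · refine ⟨0, ?_, fun _ _ => rfl⟩
      have hdiv : Tendsto (fun s : ℝ =>
          (((Real.exp (-(2*π*ν j * (α j + s*γ j))) : ℝ) : ℂ)) /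
            (1 - β j * ((Real.exp (-(2*π*(α j + s*γ j))) : ℝ) : ℂ))) atTop (nhds 0) := by
        rcases lt_or_gt_of_ne hγj with hneg | hpos
        · have hT : Tendsto (fun s : ℝ => α j + s * γ j) atTop atBot := by
            apply tendsto_atBot_add_const_left
            exact Filter.Tendsto.atTop_mul_const_of_neg hneg tendsto_id
          exact auxB (ν j) (hν j).2 (β j) (hβne j) _ hT
        · have hT : Tendsto (fun s : ℝ => α j + s * γ j) atTop atTop := by
            apply tendsto_atTop_add_const_left
            exact Filter.Tendsto.atTop_mul_const hpos tendsto_id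
          have hk : 0 < 2*π*ν j := by have := Real.pi_pos; have := (hν j).1; positivity
          have := auxA (2*π*ν j) hk 1 (β j) _ hT
          refine this.congr fun s => ?_
          rw [one_mul]
      have := hdiv.pow (ε j)
      simpa [zero_pow hε] using this
  choose L hL hL0 using key
  have hprod : Tendsto (fun s : ℝ => ∏ j, ((((Real.exp (-(2*π*ν j * (α j + s*γ j))) : ℝ) : ℂ)) /
      (1 - β j * ((Real.exp (-(2*π*(α j + s*γ j))) : ℝ) : ℂ))) ^ ε j) atTop (nhds 0) := by
    have h2 := (hL j₀).mul (tendsto_finset_prod (Finset.univ.erase j₀) (fun j _ => hL j))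
    rw [hL0 j₀ hε₀ hγ₀, zero_mul] at h2
    exact h2.congr fun s => Finset.mul_prod_erase Finset.univ _ (Finset.mem_univ j₀)
  have hfin := (tendsto_const_nhds (x := lam w) (f := atTop)).mul hprod
  rw [mul_zero] at hfin
  refine hfin.congr fun s => ?_
  rw [hfun s]

end
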